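/- Let u₁, u₂, u₃ be piecewise continuous right-continuous functions ℝ → ℝⁿ with discontinuity sequences θ⁽¹⁾, θ⁽²⁾, θ⁽³⁾ ∈ Θ respectively. Define u ε v to mean θ_u ε θ_v (ε-equivalence of discontinuity sequences) and ‖u(t) − v(t)‖ < ε for all t outside the union of ε-neighborhoods of all discontinuity points of u and of v. Then u₁ ε₁ u₂ and u₂ ε₂ u₃ imply u₁ (ε₁+ε₂) u₃. -/

import Mathlib

open Filter

def InTheta (θ : ℤ → ℝ) : Prop :=
  StrictMono θ ∧ Tendsto θ atTop atTop ∧ Tendsto θ atBot atBot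

def IsRepr (γ θ : ℤ → ℝ) : Prop :=
  Monotone γ ∧ Set.range γ = Set.range θ ∧
    ∃ m₀ : ℕ, ∀ x : ℝ, {k : ℤ | γ k = x}.Finite ∧ {k : ℤ | γ k = x}.ncard ≤ m₀

def SeqEquiv (θ θ' : ℤ → ℝ) (ε : ℝ) : Prop :=
  ∃ γ γ' : ℤ → ℝ, IsRepr γ θ ∧ IsRepr γ' θ' ∧ ∃ c : ℝ, c < ε ∧ ∀ i, |γ i - γ' i| ≤ c

/-- ε-equivalence of piecewise continuous functions u, v with discontinuity
sequences θu, θv: the sequences are ε-equivalent and the values are ε-close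
outside the ε-neighborhoods of all discontinuity points. -/
def FunEquiv {n : ℕ} (u : ℝ → (Fin n → ℝ)) (θu : ℤ → ℝ)
    (v : ℝ → (Fin n → ℝ)) (θv : ℤ → ℝ) (ε : ℝ) : Prop :=
  SeqEquiv θu θv ε ∧
    ∀ t : ℝ, (∀ i : ℤ, ε ≤ |t - θu i| ∧ ε ≤ |t - θv i|) → ‖u t - v t‖ < ε


/-- the `r`-th element of a finite set of integers, capped at the last element. -/
noncomputable def nthElem (s : Finset ℤ) (r : ℕ) : ℤ :=
  if h : 0 < s.card then
    ((s.orderIsoOfFin rfl) ⟨min r (s.card - 1), by omega⟩ : ℤ) else 0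

lemma nthElem_mem (s : Finset ℤ) (h : 0 < s.card) (r : ℕ) : nthElem s r ∈ s := by
  rw [nthElem, dif_pos h]
  exact ((s.orderIsoOfFin rfl) _).2

lemma nthElem_mono (s : Finset ℤ) {r r' : ℕ} (hrr : r ≤ r') :
    nthElem s r ≤ nthElem s r' := by
  by_cases h : 0 < s.card
  · rw [nthElem, nthElem, dif_pos h, dif_pos h]
    have : (⟨min r (s.card - 1), by omega⟩ : Fin s.card) ≤ ⟨min r' (s.card - 1), by omega⟩ := by
      simp only [Fin.mk_le_mk]; omega
    exact (s.orderIsoOfFin rfl).monotone this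
  · rw [nthElem, nthElem, dif_neg h, dif_neg h]

lemma nthElem_surj (s : Finset ℤ) {a : ℤ} (ha : a ∈ s) :
    ∃ r : ℕ, r < s.card ∧ nthElem s r = a := by
  have h : 0 < s.card := Finset.card_pos.mpr ⟨a, ha⟩
  obtain ⟨⟨r, hr⟩, hra⟩ := (s.orderIsoOfFin rfl).surjective ⟨a, ha⟩
  refine ⟨r, hr, ?_⟩
  rw [nthElem, dif_pos h]
  have : min r (s.card - 1) = r := by omega
  simp only [this]
  exact congrArg Subtype.val hra

/-- signed cumulative sum of `M` starting at `0`. -/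
noncomputable def cum (M : ℤ → ℤ) (j : ℤ) : ℤ :=
  (∑ t ∈ Finset.Ico 0 j, M t) - (∑ t ∈ Finset.Ico j 0, M t)

lemma cum_zero (M : ℤ → ℤ) : cum M 0 = 0 := by simp [cum]

lemma cum_succ (M : ℤ → ℤ) (j : ℤ) : cum M (j + 1) = cum M j + M j := by
  rcases le_or_gt 0 j with hj | hj
  · have h1 : Finset.Ico 0 (j + 1) = insert j (Finset.Ico 0 j) := by
      ext x; simp only [Finset.mem_Ico, Finset.mem_insert]; omega
    have h2 : Finset.Ico (j+1) 0 = (∅ : Finset ℤ) := by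
      apply Finset.Ico_eq_empty; omega
    have h3 : Finset.Ico j 0 = (∅ : Finset ℤ) := by
      apply Finset.Ico_eq_empty; omega
    rw [cum, cum, h1, h2, h3, Finset.sum_insert (by simp)]
    ring
  · have h1 : Finset.Ico 0 (j + 1) = (∅ : Finset ℤ) := by
      apply Finset.Ico_eq_empty; omega
    have h2 : Finset.Ico 0 j = (∅ : Finset ℤ) := by
      apply Finset.Ico_eq_empty; omega
    have h3 : Finset.Ico j 0 = insert j (Finset.Ico (j+1) 0) := by
      ext x; simp only [Finset.mem_Ico, Finset.mem_insert]; omega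
    rw [cum, cum, h1, h2, h3, Finset.sum_insert (by simp)]
    ring

lemma cum_strictMono {M : ℤ → ℤ} (hM : ∀ j, 1 ≤ M j) : StrictMono (cum M) :=
  strictMono_int_of_lt_succ fun j => by have := hM j; rw [cum_succ]; omega

lemma le_cum {M : ℤ → ℤ} (hM : ∀ j, 1 ≤ M j) {j : ℤ} (hj : 0 ≤ j) : j ≤ cum M j := by
  have hmono : Monotone (fun j => cum M j - j) := by
    apply monotone_int_of_le_succ
    intro j
    have := hM j
    simp only [cum_succ]; omega
  have := hmono hj
  simp [cum_zero] at this
  omega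

lemma cum_le {M : ℤ → ℤ} (hM : ∀ j, 1 ≤ M j) {j : ℤ} (hj : j ≤ 0) : cum M j ≤ j := by
  have hmono : Monotone (fun j => cum M j - j) := by
    apply monotone_int_of_le_succ
    intro j
    have := hM j
    simp only [cum_succ]; omega
  have := hmono hj
  simp [cum_zero] at this
  omega

lemma exists_align (f g : ℤ → ℤ) (hf : Monotone f) (hg : Monotone g)
    (hfs : Function.Surjective f) (hgs : Function.Surjective g)
    (mf mg : ℕ) (hff : ∀ j, {k | f k = j}.Finite ∧ {k | f k = j}.ncard ≤ mf)
    (hgg : ∀ j, {k | g k = j}.Finite ∧ {k | g k = j}.ncard ≤ mg) :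
    ∃ α β : ℤ → ℤ, Monotone α ∧ Monotone β ∧ Function.Surjective α ∧
      Function.Surjective β ∧ (∀ i, f (α i) = g (β i)) ∧
      (∀ a, {i | α i = a}.Finite ∧ {i | α i = a}.ncard ≤ max mf mg) ∧
      (∀ b, {i | β i = b}.Finite ∧ {i | β i = b}.ncard ≤ max mf mg) := by
  set Fs : ℤ → Finset ℤ := fun j => (hff j).1.toFinset with hFs
  set Gs : ℤ → Finset ℤ := fun j => (hgg j).1.toFinset with hGs
  have hFmem : ∀ j k, k ∈ Fs j ↔ f k = j := fun j k => (hff j).1.mem_toFinset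
  have hGmem : ∀ j k, k ∈ Gs j ↔ g k = j := fun j k => (hgg j).1.mem_toFinset
  have hFcard : ∀ j, (Fs j).card ≤ mf := by
    intro j
    have := (hff j).2
    rwa [Set.ncard_eq_toFinset_card _ (hff j).1] at this
  have hGcard : ∀ j, (Gs j).card ≤ mg := by
    intro j
    have := (hgg j).2
    rwa [Set.ncard_eq_toFinset_card _ (hgg j).1] at this
  have hFpos : ∀ j, 0 < (Fs j).card := fun j => by
    obtain ⟨k, hk⟩ := hfs j
    exact Finset.card_pos.mpr ⟨k, (hFmem j k).mpr hk⟩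
  have hGpos : ∀ j, 0 < (Gs j).card := fun j => by
    obtain ⟨k, hk⟩ := hgs j
    exact Finset.card_pos.mpr ⟨k, (hGmem j k).mpr hk⟩
  set M : ℤ → ℤ := fun j => ((max (Fs j).card (Gs j).card : ℕ) : ℤ) with hMdef
  have hM1 : ∀ j, 1 ≤ M j := by
    intro j
    have h1 := hFpos j
    simp only [hMdef]
    omega
  have hMle : ∀ j, M j ≤ ((max mf mg : ℕ) : ℤ) := by
    intro j
    have h1 := hFcard j
    have h2 := hGcard j
    simp only [hMdef]
    push_cast
    omega
  set N := cum M with hN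
  have hNs : StrictMono N := cum_strictMono hM1
  have hNsucc : ∀ j, N (j + 1) = N j + M j := fun j => cum_succ M j
  have hex : ∀ i : ℤ, ∃ j : ℤ, (N j ≤ i ∧ ∀ z, N z ≤ i → z ≤ j) := by
    intro i
    obtain ⟨j, hj1, hj2⟩ := Int.exists_greatest_of_bdd (P := fun z => N z ≤ i)
      ⟨max i 0, fun z hz => by
        rcases le_or_gt z 0 with h | h
        · omega
        · have : z ≤ N z := le_cum hM1 h.le; omega⟩
      ⟨min i 0, by have : N (min i 0) ≤ min i 0 := cum_le hM1 (min_le_right i 0); have := min_le_left i 0; omega⟩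
    exact ⟨j, hj1, hj2⟩
  choose h hh1 hh2 using hex
  have hhub : ∀ i, i < N (h i + 1) := by
    intro i
    by_contra hcon
    push_neg at hcon
    have := hh2 i (h i + 1) hcon
    omega
  have hblk_eq : ∀ i j, N j ≤ i → i < N (j + 1) → h i = j := by
    intro i j hj1 hj2
    have h1 := hh2 i j hj1
    by_contra hne
    have h2 : j + 1 ≤ h i := by omega
    have h3 := hNs.monotone h2
    have h4 := hh1 i
    omega
  have hhmono : Monotone h := fun i i' hii => hh2 i' (h i) (le_trans (hh1 i) hii)
  set α : ℤ → ℤ := fun i => nthElem (Fs (h i)) (i - N (h i)).toNat with hα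
  set β : ℤ → ℤ := fun i => nthElem (Gs (h i)) (i - N (h i)).toNat with hβ
  have hfα : ∀ i, f (α i) = h i := fun i => (hFmem _ _).mp (nthElem_mem _ (hFpos _) _)
  have hgβ : ∀ i, g (β i) = h i := fun i => (hGmem _ _).mp (nthElem_mem _ (hGpos _) _)
  -- monotonicity
  have hαmono : Monotone α := by
    intro i i' hii
    rcases lt_or_eq_of_le (hhmono hii) with hlt | heq
    · by_contra hcon
      push_neg at hcon
      have := hf hcon.le
      rw [hfα, hfα] at this
      omega
    · simp only [hα, ← heq]
      apply nthElem_mono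
      have := hh1 i
      have := hNs.monotone (le_of_eq heq)
      omega
  have hβmono : Monotone β := by
    intro i i' hii
    rcases lt_or_eq_of_le (hhmono hii) with hlt | heq
    · by_contra hcon
      push_neg at hcon
      have := hg hcon.le
      rw [hgβ, hgβ] at this
      omega
    · simp only [hβ, ← heq]
      apply nthElem_mono
      have := hh1 i
      have := hNs.monotone (le_of_eq heq)
      omega
  -- surjectivity
  have hαsurj : Function.Surjective α := by
    intro a
    obtain ⟨r, hr, hra⟩ := nthElem_surj (Fs (f a)) ((hFmem (f a) a).mpr rfl)
    refine ⟨N (f a) + r, ?_⟩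
    have hrM : (r : ℤ) < M (f a) := by
      simp only [hMdef]
      push_cast
      omega
    have hhi : h (N (f a) + r) = f a := by
      apply hblk_eq
      · omega
      · have := hNsucc (f a); omega
    simp only [hα, hhi]
    have hnt : (N (f a) + r - N (f a)).toNat = r := by omega
    rw [hnt, hra]
  have hβsurj : Function.Surjective β := by
    intro a
    obtain ⟨r, hr, hra⟩ := nthElem_surj (Gs (g a)) ((hGmem (g a) a).mpr rfl)
    refine ⟨N (g a) + r, ?_⟩
    have hrM : (r : ℤ) < M (g a) := by
      simp only [hMdef]
      push_cast
      omega
    have hhi : h (N (g a) + r) = g a := by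
      apply hblk_eq
      · omega
      · have := hNsucc (g a); omega
    simp only [hβ, hhi]
    have hnt : (N (g a) + r - N (g a)).toNat = r := by omega
    rw [hnt, hra]
  -- fibers
  have hIco : ∀ j : ℤ, (Set.Ico (N j) (N (j + 1))).Finite ∧
      (Set.Ico (N j) (N (j + 1))).ncard ≤ max mf mg := by
    intro j
    refine ⟨Set.finite_Ico _ _, ?_⟩
    rw [← Finset.coe_Ico, Set.ncard_coe_finset, Int.card_Ico]
    have h1 := hMle j
    have h2 := hNsucc j
    omega
  have hαfib : ∀ a, {i | α i = a}.Finite ∧ {i | α i = a}.ncard ≤ max mf mg := by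
    intro a
    have hsub : {i | α i = a} ⊆ Set.Ico (N (f a)) (N (f a + 1)) := by
      intro i hi
      simp only [Set.mem_setOf_eq] at hi
      have h1 := hfα i
      rw [hi] at h1
      have h2 := hh1 i
      have h3 := hhub i
      rw [h1]
      exact ⟨h2, h3⟩
    exact ⟨(hIco (f a)).1.subset hsub,
      le_trans (Set.ncard_le_ncard hsub (hIco (f a)).1) (hIco (f a)).2⟩
  have hβfib : ∀ b, {i | β i = b}.Finite ∧ {i | β i = b}.ncard ≤ max mf mg := by
    intro b
    have hsub : {i | β i = b} ⊆ Set.Ico (N (g b)) (N (g b + 1)) := by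
      intro i hi
      simp only [Set.mem_setOf_eq] at hi
      have h1 := hgβ i
      rw [hi] at h1
      have h2 := hh1 i
      have h3 := hhub i
      rw [h1]
      exact ⟨h2, h3⟩
    exact ⟨(hIco (g b)).1.subset hsub,
      le_trans (Set.ncard_le_ncard hsub (hIco (g b)).1) (hIco (g b)).2⟩
  exact ⟨α, β, hαmono, hβmono, hαsurj, hβsurj,
    fun i => by rw [hfα, hgβ], hαfib, hβfib⟩

lemma ncard_preimage_le {A B : Type*} (φ : A → B) (m : ℕ)
    (hfib : ∀ b, (φ ⁻¹' {b}).Finite ∧ (φ ⁻¹' {b}).ncard ≤ m)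
    {S : Set B} (hS : S.Finite) :
    (φ ⁻¹' S).Finite ∧ (φ ⁻¹' S).ncard ≤ S.ncard * m := by
  refine Set.Finite.induction_on (motive := fun S _ => (φ ⁻¹' S).Finite ∧ (φ ⁻¹' S).ncard ≤ S.ncard * m) S hS ?_ ?_
  · simp
  · intro b T hbT hT ih
    rw [Set.insert_eq, Set.preimage_union]
    refine ⟨((hfib b).1).union ih.1, ?_⟩
    calc (φ ⁻¹' {b} ∪ φ ⁻¹' T).ncard
        ≤ (φ ⁻¹' {b}).ncard + (φ ⁻¹' T).ncard := Set.ncard_union_le _ _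
      _ ≤ m + T.ncard * m := add_le_add (hfib b).2 ih.2
      _ ≤ (insert b T).ncard * m := by
          rw [Set.ncard_insert_of_notMem hbT hT, add_one_mul]
          omega

lemma isRepr_comp {γ θ : ℤ → ℝ} (h : IsRepr γ θ) {α : ℤ → ℤ} (hα : Monotone α)
    (hαs : Function.Surjective α) (m : ℕ)
    (hfib : ∀ a, {i | α i = a}.Finite ∧ {i | α i = a}.ncard ≤ m) :
    IsRepr (fun i => γ (α i)) θ := by
  obtain ⟨hmono, hrange, m₀, hm⟩ := h
  refine ⟨hmono.comp hα, ?_, m₀ * m, ?_⟩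
  · rw [← hrange]
    have h1 : Set.range (fun i => γ (α i)) = γ '' Set.range α := Set.range_comp γ α
    rw [h1, hαs.range_eq, Set.image_univ]
  · intro x
    have hpre : {k | γ (α k) = x} = α ⁻¹' {j | γ j = x} := rfl
    have hfib' : ∀ b, (α ⁻¹' {b}).Finite ∧ (α ⁻¹' {b}).ncard ≤ m := fun b => hfib b
    obtain ⟨h1, h2⟩ := ncard_preimage_le α m hfib' (hm x).1
    rw [hpre]
    exact ⟨h1, le_trans h2 (Nat.mul_le_mul_right m (hm x).2)⟩

lemma repr_factor {θ γ : ℤ → ℝ} (hθ : StrictMono θ) (h : IsRepr γ θ) :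
    ∃ f : ℤ → ℤ, (∀ i, θ (f i) = γ i) ∧ Monotone f ∧ Function.Surjective f ∧
      ∃ m : ℕ, ∀ j, {k | f k = j}.Finite ∧ {k | f k = j}.ncard ≤ m := by
  obtain ⟨hmono, hrange, m₀, hm⟩ := h
  have hmem : ∀ i, ∃ j, θ j = γ i := by
    intro i
    have : γ i ∈ Set.range θ := by rw [← hrange]; exact Set.mem_range_self i
    exact this
  choose f hf using hmem
  refine ⟨f, hf, ?_, ?_, m₀, ?_⟩
  · intro i i' hii
    have : θ (f i) ≤ θ (f i') := by rw [hf, hf]; exact hmono hii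
    exact (hθ.le_iff_le).mp this
  · intro j
    have : θ j ∈ Set.range γ := by rw [hrange]; exact Set.mem_range_self j
    obtain ⟨i, hi⟩ := this
    exact ⟨i, hθ.injective (by rw [hf, hi])⟩
  · intro j
    have hset : {k | f k = j} = {k | γ k = θ j} := by
      ext k
      simp only [Set.mem_setOf_eq]
      constructor
      · intro hk; rw [← hf k, hk]
      · intro hk; exact hθ.injective (by rw [hf, hk])
    rw [hset]
    exact hm (θ j)

lemma seqEquiv_trans {θ₁ θ₂ θ₃ : ℤ → ℝ} (hθ₂ : StrictMono θ₂) {ε₁ ε₂ : ℝ}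
    (h12 : SeqEquiv θ₁ θ₂ ε₁) (h23 : SeqEquiv θ₂ θ₃ ε₂) :
    SeqEquiv θ₁ θ₃ (ε₁ + ε₂) := by
  obtain ⟨γ₁, γ₂, r₁, r₂, c₁, hc₁, hb₁⟩ := h12
  obtain ⟨γ₂', γ₃, r₂', r₃, c₂, hc₂, hb₂⟩ := h23
  obtain ⟨f, hfθ, hfm, hfs, mf, hffib⟩ := repr_factor hθ₂ r₂
  obtain ⟨g, hgθ, hgm, hgs, mg, hgfib⟩ := repr_factor hθ₂ r₂'
  obtain ⟨α, β, hαm, hβm, hαs, hβs, hfg, hαfib, hβfib⟩ :=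
    exists_align f g hfm hgm hfs hgs mf mg hffib hgfib
  refine ⟨fun i => γ₁ (α i), fun i => γ₃ (β i),
    isRepr_comp r₁ hαm hαs _ hαfib, isRepr_comp r₃ hβm hβs _ hβfib,
    c₁ + c₂, by linarith, ?_⟩
  intro i
  have hmid : γ₂ (α i) = γ₂' (β i) := by
    rw [← hfθ (α i), ← hgθ (β i), hfg i]
  have htri := abs_sub_le (γ₁ (α i)) (γ₂ (α i)) (γ₃ (β i))
  nth_rewrite 2 [hmid] at htri
  exact le_trans htri (add_le_add (hb₁ (α i)) (hb₂ (β i)))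

/-- Lemma 6: the triangle inequality for ε-equivalence of
piecewise continuous right-continuous functions. -/
theorem funEquiv_triangle
    (n : ℕ)
    (u₁ u₂ u₃ : ℝ → (Fin n → ℝ)) (θ₁ θ₂ θ₃ : ℤ → ℝ) (ε₁ ε₂ : ℝ)
    (h₁ : InTheta θ₁) (h₂ : InTheta θ₂) (h₃ : InTheta θ₃)
    -- u_k is piecewise continuous, right continuous, discontinuities only at θ_k
    (hpc₁ : ∀ i : ℤ, ContinuousOn u₁ (Set.Ico (θ₁ i) (θ₁ (i + 1))))
    (hpc₂ : ∀ i : ℤ, ContinuousOn u₂ (Set.Ico (θ₂ i) (θ₂ (i + 1))))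
    (hpc₃ : ∀ i : ℤ, ContinuousOn u₃ (Set.Ico (θ₃ i) (θ₃ (i + 1))))
    (h₁₂ : FunEquiv u₁ θ₁ u₂ θ₂ ε₁) (h₂₃ : FunEquiv u₂ θ₂ u₃ θ₃ ε₂) :
    FunEquiv u₁ θ₁ u₃ θ₃ (ε₁ + ε₂) := by
  obtain ⟨hs₁₂, hv₁₂⟩ := h₁₂
  obtain ⟨hs₂₃, hv₂₃⟩ := h₂₃
  refine ⟨seqEquiv_trans h₂.1 hs₁₂ hs₂₃, ?_⟩
  obtain ⟨γ₁, γ₂, r₁, r₂, c₁, hc₁, hb₁⟩ := hs₁₂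
  obtain ⟨γ₂', γ₃, r₂', r₃, c₂, hc₂, hb₂⟩ := hs₂₃
  have hc₁0 : 0 ≤ c₁ := le_trans (abs_nonneg _) (hb₁ 0)
  have hc₂0 : 0 ≤ c₂ := le_trans (abs_nonneg _) (hb₂ 0)
  have hε₁ : 0 < ε₁ := lt_of_le_of_lt hc₁0 hc₁
  have hε₂ : 0 < ε₂ := lt_of_le_of_lt hc₂0 hc₂
  have hA : ∀ j, ∃ i, |θ₁ i - θ₂ j| ≤ c₁ := by
    intro j
    have h2 : θ₂ j ∈ Set.range γ₂ := by rw [r₂.2.1]; exact Set.mem_range_self j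
    obtain ⟨k, hk⟩ := h2
    have h1 : γ₁ k ∈ Set.range θ₁ := by rw [← r₁.2.1]; exact Set.mem_range_self k
    obtain ⟨i, hi⟩ := h1
    exact ⟨i, by rw [hi, ← hk]; exact hb₁ k⟩
  have hB : ∀ j, ∃ i, |θ₃ i - θ₂ j| ≤ c₂ := by
    intro j
    have h2 : θ₂ j ∈ Set.range γ₂' := by rw [r₂'.2.1]; exact Set.mem_range_self j
    obtain ⟨k, hk⟩ := h2
    have h1 : γ₃ k ∈ Set.range θ₃ := by rw [← r₃.2.1]; exact Set.mem_range_self k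
    obtain ⟨i, hi⟩ := h1
    exact ⟨i, by rw [hi, ← hk]; exact (abs_sub_comm (γ₂' k) (γ₃ k) ▸ hb₂ k)⟩
  intro t ht
  have hclose₂ : ∀ j, ε₁ ≤ |t - θ₂ j| ∧ ε₂ ≤ |t - θ₂ j| := by
    intro j
    obtain ⟨i, hi⟩ := hA j
    obtain ⟨i', hi'⟩ := hB j
    have h1 := (ht i).1
    have h2 := (ht i').2
    constructor
    · have h3 : |t - θ₃ i'| ≤ |t - θ₂ j| + |θ₃ i' - θ₂ j| := by
        have h4 := abs_sub_le t (θ₂ j) (θ₃ i')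
        rw [abs_sub_comm (θ₂ j) (θ₃ i')] at h4
        exact h4
      linarith
    · have h3 : |t - θ₁ i| ≤ |t - θ₂ j| + |θ₁ i - θ₂ j| := by
        have h4 := abs_sub_le t (θ₂ j) (θ₁ i)
        rw [abs_sub_comm (θ₂ j) (θ₁ i)] at h4
        exact h4
      linarith
  have k1 := hv₁₂ t (fun i => ⟨by linarith [(ht i).1], (hclose₂ i).1⟩)
  have k2 := hv₂₃ t (fun i => ⟨(hclose₂ i).2, by linarith [(ht i).2]⟩)
  have := norm_sub_le_norm_sub_add_norm_sub (u₁ t) (u₂ t) (u₃ t)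
  linarith
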